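/- If h : ℝ × {−ω₀, ω₀} → ℝ is 2π-periodic and C² in θ for each ω and is odd in the sense h(−θ, −ω) = −h(θ, ω) for all θ, ω, then Lh(−θ, −ω) = −Lh(θ, ω) for all θ ∈ ℝ and ω ∈ {−ω₀, ω₀}; that is, the linearized operator L maps odd functions to odd functions. -/

import Mathlib

noncomputable section

open MeasureTheory

/-- `G u ω x = x·cos u + 2ωu`. -/
def G (u ω x : ℝ) : ℝ := x * Real.cos u + 2 * ω * u

/-- The unnormalized stationary profile `S(θ, ω, x)`. -/
def S (θ ω x : ℝ) : ℝ :=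
  Real.exp (G θ ω x) *
    ((1 - Real.exp (4 * Real.pi * ω)) * (∫ u in (0:ℝ)..θ, Real.exp (-(G u ω x))) +
      Real.exp (4 * Real.pi * ω) * (∫ u in (0:ℝ)..(2 * Real.pi), Real.exp (-(G u ω x))))

/-- The normalization constant `Z(ω, x)`. -/
def Z (ω x : ℝ) : ℝ := ∫ θ in (0:ℝ)..(2 * Real.pi), S θ ω x

/-- `Ψ_μ` for the binary disorder law `μ = (1/2)(δ_{-ω₀} + δ_{ω₀})`. -/
def psiMu (ω₀ x : ℝ) : ℝ :=
  (1 / 2) * ((∫ θ in (0:ℝ)..(2 * Real.pi), Real.cos θ * S θ (-ω₀) x) / Z (-ω₀) x +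
    (∫ θ in (0:ℝ)..(2 * Real.pi), Real.cos θ * S θ ω₀ x) / Z ω₀ x)

/-- The stationary density `q(θ, ω) = S(θ, ω, 2Kr)/Z(ω, 2Kr)`. -/
def q (K r θ ω : ℝ) : ℝ := S θ ω (2 * K * r) / Z ω (2 * K * r)

/-- `κ(ω) = (1 − exp(4πω))/(2 Z(ω, 2Kr))`. -/
def kap (K r ω : ℝ) : ℝ := (1 - Real.exp (4 * Real.pi * ω)) / (2 * Z ω (2 * K * r))

/-- The averaged convolution `⟨J∗h⟩_μ(θ)` for binary disorder. -/
def Jconv (K ω₀ : ℝ) (h : ℝ → ℝ → ℝ) (θ : ℝ) : ℝ :=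
  -(K / 2) * ((∫ φ in (0:ℝ)..(2 * Real.pi), Real.sin φ * h (θ - φ) (-ω₀)) +
    (∫ φ in (0:ℝ)..(2 * Real.pi), Real.sin φ * h (θ - φ) ω₀))

/-- The linearized evolution operator `L` around the stationary density `q`. -/
def Lop (K ω₀ r : ℝ) (h : ℝ → ℝ → ℝ) (θ ω : ℝ) : ℝ :=
  (1 / 2) * deriv (deriv (fun u => h u ω)) θ -
    deriv (fun u => h u ω * (Jconv K ω₀ (q K r) u + ω) + q K r u ω * Jconv K ω₀ h u) θ

-- auxiliary lemmas

lemma contG (ω x : ℝ) : Continuous (fun u => Real.exp (-(G u ω x))) := by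
  unfold G; continuity

lemma G_neg (u ω x : ℝ) : G (-u) (-ω) x = G u ω x := by
  simp only [G, Real.cos_neg]; ring

lemma G_negneg (u ω x : ℝ) : G u (-ω) x = G (-u) ω x := by
  have := G_neg (-u) ω x; rw [neg_neg] at this; rw [← this]

lemma G_addp (u ω x : ℝ) : G (u + 2 * Real.pi) ω x = G u ω x + 4 * Real.pi * ω := by
  simp only [G, Real.cos_add_two_pi]; ring

lemma G_subp (u ω x : ℝ) : G (u - 2 * Real.pi) ω x = G u ω x - 4 * Real.pi * ω := by
  simp only [G, Real.cos_sub_two_pi]; ring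

lemma A_neg (θ ω x : ℝ) :
    (∫ u in (0:ℝ)..(-θ), Real.exp (-(G u (-ω) x)))
      = - ∫ u in (0:ℝ)..θ, Real.exp (-(G u ω x)) := by
  have h1 : (∫ u in (0:ℝ)..(-θ), Real.exp (-(G u (-ω) x)))
      = ∫ u in (0:ℝ)..(-θ), (fun v => Real.exp (-(G v ω x))) (-u) :=
    intervalIntegral.integral_congr (fun u _ => by simp only [G_negneg])
  have h2 := intervalIntegral.integral_comp_neg (a := 0) (b := -θ)
    (fun v => Real.exp (-(G v ω x)))
  rw [h1, h2, neg_neg, neg_zero, intervalIntegral.integral_symm]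

lemma B_neg (ω x : ℝ) :
    (∫ u in (0:ℝ)..(2 * Real.pi), Real.exp (-(G u (-ω) x)))
      = Real.exp (4 * Real.pi * ω) * ∫ u in (0:ℝ)..(2 * Real.pi), Real.exp (-(G u ω x)) := by
  have h1 : (∫ u in (0:ℝ)..(2 * Real.pi), Real.exp (-(G u (-ω) x)))
      = ∫ u in (0:ℝ)..(2 * Real.pi), (fun v => Real.exp (-(G v ω x))) (-u) :=
    intervalIntegral.integral_congr (fun u _ => by simp only [G_negneg])
  have h2 := intervalIntegral.integral_comp_neg (a := 0) (b := 2 * Real.pi)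
    (fun v => Real.exp (-(G v ω x)))
  have h3 := intervalIntegral.integral_comp_sub_right (a := 0) (b := 2 * Real.pi)
    (fun v => Real.exp (-(G v ω x))) (2 * Real.pi)
  have h4 : (∫ u in (0:ℝ)..(2 * Real.pi), (fun v => Real.exp (-(G v ω x))) (u - 2 * Real.pi))
      = ∫ u in (0:ℝ)..(2 * Real.pi), Real.exp (4 * Real.pi * ω) * Real.exp (-(G u ω x)) :=
    intervalIntegral.integral_congr (fun u _ => by
      simp only [G_subp, neg_sub, ← Real.exp_add]; ring_nf)
  norm_num at h3
  rw [h1, h2, neg_zero, ← h3, h4, intervalIntegral.integral_const_mul]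

lemma exp_mul_exp_neg (y : ℝ) : Real.exp (-y) * Real.exp y = 1 := by
  rw [← Real.exp_add]; simp

lemma S_neg (θ ω x : ℝ) : S (-θ) (-ω) x = Real.exp (-(4 * Real.pi * ω)) * S θ ω x := by
  unfold S
  rw [A_neg, B_neg, G_neg, show (4 * Real.pi * -ω : ℝ) = -(4 * Real.pi * ω) by ring]
  have hca := exp_mul_exp_neg (4 * Real.pi * ω)
  set E := Real.exp (G θ ω x)
  set c := Real.exp (-(4 * Real.pi * ω))
  set a := Real.exp (4 * Real.pi * ω)
  set A := ∫ u in (0:ℝ)..θ, Real.exp (-(G u ω x))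
  set B := ∫ u in (0:ℝ)..(2 * Real.pi), Real.exp (-(G u ω x))
  linear_combination E * A * hca

lemma A_add (θ ω x : ℝ) :
    (∫ u in (0:ℝ)..(θ + 2 * Real.pi), Real.exp (-(G u ω x)))
      = (∫ u in (0:ℝ)..(2 * Real.pi), Real.exp (-(G u ω x)))
        + Real.exp (-(4 * Real.pi * ω)) * ∫ u in (0:ℝ)..θ, Real.exp (-(G u ω x)) := by
  have hint : ∀ a b : ℝ, IntervalIntegrable (fun u => Real.exp (-(G u ω x))) volume a b :=
    fun a b => (contG ω x).intervalIntegrable a b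
  rw [← intervalIntegral.integral_add_adjacent_intervals (hint 0 (2 * Real.pi))
    (hint (2 * Real.pi) (θ + 2 * Real.pi))]
  congr 1
  have h3 := intervalIntegral.integral_comp_add_right (a := 0) (b := θ)
    (fun v => Real.exp (-(G v ω x))) (2 * Real.pi)
  norm_num at h3
  have h4 : (∫ u in (0:ℝ)..θ, Real.exp (-(G (u + 2 * Real.pi) ω x)))
      = ∫ u in (0:ℝ)..θ, Real.exp (-(4 * Real.pi * ω)) * Real.exp (-(G u ω x)) :=
    intervalIntegral.integral_congr (fun u _ => by
      simp only [G_addp, neg_add, ← Real.exp_add]; ring_nf)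
  rw [← h3, h4, intervalIntegral.integral_const_mul]

lemma S_per (ω x : ℝ) : Function.Periodic (fun θ => S θ ω x) (2 * Real.pi) := by
  intro θ
  simp only
  unfold S
  rw [A_add, G_addp, Real.exp_add]
  have hca := exp_mul_exp_neg (4 * Real.pi * ω)
  set E := Real.exp (G θ ω x)
  set c := Real.exp (-(4 * Real.pi * ω))
  set a := Real.exp (4 * Real.pi * ω)
  set A := ∫ u in (0:ℝ)..θ, Real.exp (-(G u ω x))
  set B := ∫ u in (0:ℝ)..(2 * Real.pi), Real.exp (-(G u ω x))
  linear_combination E * A * (1 - a) * hca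

lemma Z_neg (ω x : ℝ) : Z (-ω) x = Real.exp (-(4 * Real.pi * ω)) * Z ω x := by
  unfold Z
  have h1 : (∫ θ in (0:ℝ)..(2 * Real.pi), S θ (-ω) x)
      = ∫ θ in (0:ℝ)..(2 * Real.pi),
          Real.exp (-(4 * Real.pi * ω)) * ((fun v => S v ω x) (-θ)) :=
    intervalIntegral.integral_congr (fun θ _ => by
      simp only
      have := S_neg (-θ) ω x; rw [neg_neg] at this; rw [this])
  rw [h1, intervalIntegral.integral_const_mul]
  have h2 := intervalIntegral.integral_comp_neg (a := 0) (b := 2 * Real.pi)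
    (fun v => S v ω x)
  have h3 := intervalIntegral.integral_comp_sub_right (a := 0) (b := 2 * Real.pi)
    (fun v => S v ω x) (2 * Real.pi)
  norm_num at h3
  have h4 : (∫ θ in (0:ℝ)..(2 * Real.pi), S (θ - 2 * Real.pi) ω x)
      = ∫ θ in (0:ℝ)..(2 * Real.pi), S θ ω x :=
    intervalIntegral.integral_congr (fun θ _ => (S_per ω x).sub_eq θ)
  rw [h2, neg_zero, ← h3, h4]

lemma q_even (K r θ ω : ℝ) : q K r (-θ) (-ω) = q K r θ ω := by
  unfold q
  rw [S_neg, Z_neg]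
  exact mul_div_mul_left _ _ (Real.exp_ne_zero _)

lemma q_per (K r ω : ℝ) : Function.Periodic (fun θ => q K r θ ω) (2 * Real.pi) := by
  intro θ
  simp only [q]
  have hs : S (θ + 2 * Real.pi) ω (2 * K * r) = S θ ω (2 * K * r) := S_per ω (2 * K * r) θ
  rw [hs]

lemma Jconv_neg (K ω₀ : ℝ) (g : ℝ → ℝ → ℝ) (ε : ℝ)
    (hgper : ∀ ω ∈ ({-ω₀, ω₀} : Set ℝ), Function.Periodic (fun θ => g θ ω) (2 * Real.pi))
    (hg : ∀ x : ℝ, ∀ ω ∈ ({-ω₀, ω₀} : Set ℝ), g (-x) (-ω) = ε * g x ω)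
    (θ : ℝ) : Jconv K ω₀ g (-θ) = -ε * Jconv K ω₀ g θ := by
  have key : ∀ ω ∈ ({-ω₀, ω₀} : Set ℝ),
      (∫ φ in (0:ℝ)..(2 * Real.pi), Real.sin φ * g (-θ - φ) ω)
        = -ε * ∫ φ in (0:ℝ)..(2 * Real.pi), Real.sin φ * g (θ - φ) (-ω) := by
    intro ω hω
    have hω' : -ω ∈ ({-ω₀, ω₀} : Set ℝ) := by
      simp only [Set.mem_insert_iff, Set.mem_singleton_iff] at hω ⊢
      rcases hω with h1 | h1 <;> simp [h1]
    have h2 := intervalIntegral.integral_comp_sub_left (a := 0) (b := 2 * Real.pi)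
      (fun φ => Real.sin φ * g (-θ - φ) ω) (2 * Real.pi)
    norm_num at h2
    have h3 : (∫ ψ in (0:ℝ)..(2 * Real.pi), Real.sin ψ * g (-θ - (2 * Real.pi - ψ)) ω)
        = ∫ ψ in (0:ℝ)..(2 * Real.pi), ε * (Real.sin ψ * g (θ - ψ) (-ω)) := by
      refine intervalIntegral.integral_congr (fun ψ _ => ?_)
      have harg : -θ - (2 * Real.pi - ψ) = (ψ - θ) - 2 * Real.pi := by ring
      have hper' : g (ψ - θ - 2 * Real.pi) ω = g (ψ - θ) ω := (hgper ω hω).sub_eq (ψ - θ)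
      have hodd' : g (ψ - θ) ω = ε * g (θ - ψ) (-ω) := by
        have h5 := hg (θ - ψ) (-ω) hω'
        rw [neg_neg] at h5
        rw [show ψ - θ = -(θ - ψ) by ring, h5]
      rw [harg, hper', hodd']; ring
    rw [← h2, h3, intervalIntegral.integral_const_mul]
    ring
  unfold Jconv
  have k1 := key (-ω₀) (by simp)
  have k2 := key ω₀ (by simp)
  rw [neg_neg] at k1
  rw [k1, k2]
  ring

/-- The linearized operator `L` maps odd functions (in the joint sense) to odd functions. -/
theorem stmt2 (K ω₀ r : ℝ) (hK : 0 < K) (hω₀ : 0 < ω₀) (hr : 0 < r)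
    (hfix : r = psiMu ω₀ (2 * K * r)) (h : ℝ → ℝ → ℝ)
    (hper : ∀ ω ∈ ({-ω₀, ω₀} : Set ℝ), Function.Periodic (fun θ => h θ ω) (2 * Real.pi))
    (hC2 : ∀ ω ∈ ({-ω₀, ω₀} : Set ℝ), ContDiff ℝ 2 (fun θ => h θ ω))
    (hodd : ∀ θ : ℝ, ∀ ω ∈ ({-ω₀, ω₀} : Set ℝ), h (-θ) (-ω) = -h θ ω) :
    ∀ θ : ℝ, ∀ ω ∈ ({-ω₀, ω₀} : Set ℝ),
      Lop K ω₀ r h (-θ) (-ω) = -Lop K ω₀ r h θ ω := by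
  intro θ ω hω
  have hPodd : ∀ t : ℝ, Jconv K ω₀ (q K r) (-t) = -Jconv K ω₀ (q K r) t := by
    intro t
    have := Jconv_neg K ω₀ (q K r) 1 (fun ω' _ => q_per K r ω')
      (fun x ω' _ => by rw [one_mul, q_even]) t
    simpa using this
  have hHeven : ∀ t : ℝ, Jconv K ω₀ h (-t) = Jconv K ω₀ h t := by
    intro t
    have := Jconv_neg K ω₀ h (-1) hper
      (fun x ω' hm => by rw [hodd x ω' hm]; ring) t
    simpa using this
  have hneg : (fun u : ℝ => h u (-ω)) = (fun u => -((fun v => h v ω) (-u))) := by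
    funext u
    simp only
    have h1 := hodd (-u) ω hω
    rwa [neg_neg] at h1
  have hd1 : deriv (fun u : ℝ => h u (-ω)) = fun s => deriv (fun v => h v ω) (-s) := by
    funext s
    rw [hneg, deriv.fun_neg, deriv_comp_neg (fun v => h v ω) s, neg_neg]
  have hFfun : (fun u => h u (-ω) * (Jconv K ω₀ (q K r) u + -ω) + q K r u (-ω) * Jconv K ω₀ h u)
      = (fun u => (fun v => h v ω * (Jconv K ω₀ (q K r) v + ω) + q K r v ω * Jconv K ω₀ h v) (-u)) := by
    funext u
    simp only
    have h1 : h u (-ω) = -h (-u) ω := by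
      have := hodd (-u) ω hω; rwa [neg_neg] at this
    have h2 : q K r u (-ω) = q K r (-u) ω := by
      have := q_even K r (-u) ω; rwa [neg_neg] at this
    have h3 : Jconv K ω₀ (q K r) u = -Jconv K ω₀ (q K r) (-u) := by
      rw [hPodd u, neg_neg]
    rw [h1, h2, h3, ← hHeven u]
    ring
  unfold Lop
  rw [hFfun, hd1, deriv_comp_neg (deriv (fun v => h v ω)) (-θ),
    deriv_comp_neg (fun v => h v ω * (Jconv K ω₀ (q K r) v + ω) + q K r v ω * Jconv K ω₀ h v) (-θ)]
  simp only [neg_neg]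
  exact (fun a b : ℝ => by ring :
    ∀ a b : ℝ, 1 / 2 * -a - -b = -(1 / 2 * a - b)) _ _
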